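/- Let x^L < 0. The derivative of the convex envelope F₃^{cv} of tanh on [x^L, x^U] (where x^L < 0 < x^U) is Lipschitz continuous on [x^L, x^U] with Lipschitz constant at most 2 sinh(|x^L|). -/

import Mathlib

open Real

lemma my_hasDerivAt_tanh (x : ℝ) :
    HasDerivAt Real.tanh (1 - Real.tanh x ^ 2) x := by
  have hc : Real.cosh x ≠ 0 := (Real.cosh_pos x).ne'
  have h := (Real.hasDerivAt_sinh x).div (Real.hasDerivAt_cosh x) hc
  have he : ∀ y, Real.tanh y = Real.sinh y / Real.cosh y := fun y =>
    Real.tanh_eq_sinh_div_cosh y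
  simp only [Pi.div_def, ← he] at h
  refine h.congr_deriv ?_
  rw [he]
  have hsq := Real.cosh_sq_sub_sinh_sq x
  field_simp

lemma tanh_sq_lipschitz (xL : ℝ) {a b : ℝ} (ha : a ∈ Set.Icc xL 0)
    (hb : b ∈ Set.Icc xL 0) :
    |Real.tanh a ^ 2 - Real.tanh b ^ 2| ≤ 2 * Real.sinh |xL| * |a - b| := by
  have key := Convex.norm_image_sub_le_of_norm_hasDerivWithin_le
    (f := fun t => Real.tanh t ^ 2)
    (f' := fun t => 2 * Real.tanh t ^ 1 * (1 - Real.tanh t ^ 2))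
    (C := 2 * Real.sinh |xL|) (s := Set.Icc xL 0)
    (fun t _ => ((my_hasDerivAt_tanh t).pow 2).hasDerivWithinAt)
    (fun t ht => by
      have hsc : |Real.sinh t| ≤ Real.cosh t := by
        nlinarith [Real.cosh_sq_sub_sinh_sq t, Real.cosh_pos t, abs_nonneg (Real.sinh t),
          sq_abs (Real.sinh t), le_abs_self (Real.sinh t), neg_abs_le (Real.sinh t)]
      have h1 : |Real.tanh t| ≤ 1 := by
        rw [Real.tanh_eq_sinh_div_cosh, abs_div, abs_of_pos (Real.cosh_pos t)]
        exact div_le_one_of_le₀ hsc (le_of_lt (Real.cosh_pos t))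
      have h2 : |1 - Real.tanh t ^ 2| ≤ 1 := by
        rw [abs_le]
        constructor <;> nlinarith [sq_nonneg (Real.tanh t), sq_abs (Real.tanh t),
          abs_nonneg (Real.tanh t)]
      have h3 : |Real.tanh t| ≤ |Real.sinh t| := by
        rw [Real.tanh_eq_sinh_div_cosh, abs_div, abs_of_pos (Real.cosh_pos t)]
        exact div_le_self (abs_nonneg _) (Real.one_le_cosh t)
      have h4 : |Real.sinh t| ≤ Real.sinh |xL| := by
        rw [Real.abs_sinh]
        apply Real.sinh_le_sinh.mpr
        rw [abs_le]
        constructor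
        · cases abs_cases xL with
          | inl h => linarith [ht.1, ht.2]
          | inr h => linarith [ht.1]
        · cases abs_cases xL with
          | inl h => linarith [ht.1, ht.2]
          | inr h => linarith [ht.2]
      calc ‖2 * Real.tanh t ^ 1 * (1 - Real.tanh t ^ 2)‖
          = 2 * |Real.tanh t| * |1 - Real.tanh t ^ 2| := by
            rw [Real.norm_eq_abs, abs_mul, abs_mul]
            simp [abs_of_nonneg, pow_one]
        _ ≤ 2 * |Real.sinh t| * 1 := by
            apply mul_le_mul (by linarith) h2 (abs_nonneg _) (by positivity)
        _ ≤ 2 * Real.sinh |xL| := by linarith)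
    (convex_Icc xL 0) hb ha
  simpa [Real.norm_eq_abs, abs_sub_comm] using key

theorem tanh_convex_envelope_deriv_lipschitz (xL xU xc : ℝ) (h1 : xL < 0) (h2 : 0 < xU)
    (hc : xc ∈ Set.Icc xL 0)
    (htan : 1 - Real.tanh xc ^ 2 = (Real.tanh xU - Real.tanh xc) / (xU - xc))
    (F : ℝ → ℝ)
    (hF : ∀ x, F x = if x ≤ xc then Real.tanh x
      else Real.tanh xc + ((Real.tanh xU - Real.tanh xc) / (xU - xc)) * (x - xc)) :
    ∀ x ∈ Set.Icc xL xU, ∀ y ∈ Set.Icc xL xU,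
      |deriv F x - deriv F y| ≤ 2 * Real.sinh |xL| * |x - y| := by
  set m : ℝ := (Real.tanh xU - Real.tanh xc) / (xU - xc) with hm
  -- deriv F below xc
  have hlt : ∀ x, x < xc → deriv F x = 1 - Real.tanh x ^ 2 := by
    intro x hx
    have heq : F =ᶠ[nhds x] Real.tanh := by
      filter_upwards [Iio_mem_nhds hx] with t ht
      rw [hF t, if_pos (le_of_lt ht)]
    rw [heq.deriv_eq, (my_hasDerivAt_tanh x).deriv]
  -- deriv F above xc
  have hgt : ∀ x, xc < x → deriv F x = m := by
    intro x hx
    have heq : F =ᶠ[nhds x] fun t => Real.tanh xc + m * (t - xc) := by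
      filter_upwards [Ioi_mem_nhds hx] with t ht
      rw [hF t, if_neg (not_le.mpr ht)]
    rw [heq.deriv_eq]
    have : HasDerivAt (fun t => Real.tanh xc + m * (t - xc)) m x := by
      simpa using (((hasDerivAt_id x).sub_const xc).const_mul m).const_add (Real.tanh xc)
    exact this.deriv
  -- deriv F at xc
  have hat : deriv F xc = m := by
    have hleft : HasDerivWithinAt F m (Set.Iic xc) xc := by
      have h := ((my_hasDerivAt_tanh xc).hasDerivWithinAt (s := Set.Iic xc))
      rw [htan] at h
      apply h.congr
      · intro t ht; rw [hF t, if_pos (Set.mem_Iic.mp ht)]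
      · rw [hF xc, if_pos le_rfl]
    have hright : HasDerivWithinAt F m (Set.Ici xc) xc := by
      have h : HasDerivAt (fun t => Real.tanh xc + m * (t - xc)) m xc := by
        simpa using (((hasDerivAt_id xc).sub_const xc).const_mul m).const_add (Real.tanh xc)
      apply (h.hasDerivWithinAt (s := Set.Ici xc)).congr
      · intro t ht
        rcases eq_or_lt_of_le (Set.mem_Ici.mp ht) with h' | h'
        · rw [hF t, ← h', if_pos le_rfl]; simp
        · rw [hF t, if_neg (not_le.mpr h')]
      · rw [hF xc, if_pos le_rfl]; simp
    have := (hleft.union hright)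
    rw [Set.Iic_union_Ici] at this
    exact (this.hasDerivAt (by simp)).deriv
  have hd : ∀ x, deriv F x = if x ≤ xc then 1 - Real.tanh x ^ 2 else m := by
    intro x
    rcases lt_trichotomy x xc with h | h | h
    · rw [hlt x h, if_pos (le_of_lt h)]
    · subst h; rw [hat, if_pos le_rfl, htan]
    · rw [hgt x h, if_neg (not_le.mpr h)]
  have hK : 0 ≤ 2 * Real.sinh |xL| := by
    have := Real.sinh_nonneg_iff.mpr (abs_nonneg xL)
    linarith
  intro x hx y hy
  rw [hd x, hd y]
  -- key lemma
  have core : ∀ a b : ℝ, a ∈ Set.Icc xL 0 → b ∈ Set.Icc xL 0 →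
      |(1 - Real.tanh a ^ 2) - (1 - Real.tanh b ^ 2)| ≤ 2 * Real.sinh |xL| * |a - b| := by
    intro a b ha hb
    have h := tanh_sq_lipschitz xL hb ha
    rw [show (1 - Real.tanh a ^ 2) - (1 - Real.tanh b ^ 2)
        = Real.tanh b ^ 2 - Real.tanh a ^ 2 from by ring, abs_sub_comm a b]
    exact h
  by_cases hxc : x ≤ xc <;> by_cases hyc : y ≤ xc
  · simp only [if_pos hxc, if_pos hyc]
    exact core x y ⟨hx.1, le_trans hxc hc.2⟩ ⟨hy.1, le_trans hyc hc.2⟩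
  · simp only [if_pos hxc, if_neg hyc]
    push_neg at hyc
    rw [← htan]
    have h1 := core x xc ⟨hx.1, le_trans hxc hc.2⟩ ⟨hc.1, hc.2⟩
    have h2 : |x - xc| ≤ |x - y| := by
      rw [abs_of_nonpos (by linarith), abs_of_nonpos (by linarith)]
      linarith
    calc |(1 - Real.tanh x ^ 2) - (1 - Real.tanh xc ^ 2)| ≤ 2 * Real.sinh |xL| * |x - xc| := h1
      _ ≤ 2 * Real.sinh |xL| * |x - y| := by
          exact mul_le_mul_of_nonneg_left h2 hK
  · simp only [if_neg hxc, if_pos hyc]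
    push_neg at hxc
    rw [← htan]
    have h1 := core xc y ⟨hc.1, hc.2⟩ ⟨hy.1, le_trans hyc hc.2⟩
    have h2 : |xc - y| ≤ |x - y| := by
      rw [abs_of_nonneg (by linarith), abs_of_nonneg (by linarith)]
      linarith
    calc |(1 - Real.tanh xc ^ 2) - (1 - Real.tanh y ^ 2)| ≤ 2 * Real.sinh |xL| * |xc - y| := h1
      _ ≤ 2 * Real.sinh |xL| * |x - y| := mul_le_mul_of_nonneg_left h2 hK
  · simp only [if_neg hxc, if_neg hyc, sub_self, abs_zero]
    positivity
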